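/- For every finite H ⊆ [p]^m and every i ∈ [m], the shifting average k-degree does not decrease under shifting: savd(S_i(H)) ≥ savd(H), where savd(G) = (1/|G|) ∑_{e edge of G(G)} max(|e| - k, 0). -/

import Mathlib

/-- The edge of the one-inclusion graph of `G ⊆ [p]^m` in direction `j` through `v`. -/
def edge {m p : ℕ} (G : Finset (Fin m → Fin p)) (j : Fin m) (v : Fin m → Fin p) :
    Finset (Fin m → Fin p) :=
  G.filter fun g => ∀ l, l ≠ j → g l = v l

/-- The shifting operator in direction `i`. -/
def shift {m p : ℕ} (i : Fin m) (H : Finset (Fin m → Fin p)) :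
    Finset (Fin m → Fin p) :=
  Finset.univ.filter fun g =>
    (g i : ℕ) < (H.filter fun h => ∀ j, j ≠ i → h j = g j).card

open Finset Function

namespace Stmt11

set_option linter.unusedSectionVars false
variable {m p k : ℕ} [NeZero p]

lemma edge_congr (G : Finset (Fin m → Fin p)) (j : Fin m) {u v : Fin m → Fin p}
    (huv : ∀ l, l ≠ j → u l = v l) : edge G j u = edge G j v := by
  unfold edge
  apply Finset.filter_congr
  intro h _
  constructor <;> intro hh l hl
  · rw [hh l hl, huv l hl]
  · rw [hh l hl, ← huv l hl]

/-- canonical representatives in direction j -/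
def V (j : Fin m) : Finset (Fin m → Fin p) := Finset.univ.filter fun v => v j = 0

lemma update_eq_iff_agree {j : Fin m} {h v : Fin m → Fin p} (hv : v j = 0) :
    Function.update h j 0 = v ↔ ∀ l, l ≠ j → h l = v l := by
  constructor
  · intro he l hl
    rw [← he, Function.update_of_ne hl]
  · intro ha
    funext l
    by_cases hl : l = j
    · subst hl; rw [Function.update_self, hv]
    · rw [Function.update_of_ne hl]; exact ha l hl

lemma sum_edge_card (G : Finset (Fin m → Fin p)) (j : Fin m) :
    ∑ v ∈ V j, (edge G j v).card = G.card := by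
  rw [Finset.card_eq_sum_card_fiberwise (f := fun h => Function.update h j 0) (t := V j)]
  · apply Finset.sum_congr rfl
    intro v hv
    simp only [V, Finset.mem_filter] at hv
    congr 1
    unfold edge
    apply Finset.filter_congr
    intro h _
    simpa using (update_eq_iff_agree (h := h) hv.2).symm
  · intro x _
    simp [V]

lemma mem_edge_self (G : Finset (Fin m → Fin p)) (j : Fin m) {h : Fin m → Fin p}
    (hh : h ∈ G) : h ∈ edge G j (Function.update h j 0) := by
  unfold edge
  rw [Finset.mem_filter]
  exact ⟨hh, fun l hl => (Function.update_of_ne hl 0 h).symm⟩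

lemma sum_image_edge (G : Finset (Fin m → Fin p)) (j : Fin m) (k : ℕ) :
    ∑ e ∈ G.image (fun h => edge G j h), (e.card - k) =
      ∑ v ∈ V j, ((edge G j v).card - k) := by
  have h1 : G.image (fun h => edge G j h) =
      (G.image fun h => Function.update h j 0).image (fun v => edge G j v) := by
    rw [Finset.image_image]
    apply Finset.image_congr
    intro h _
    exact edge_congr G j (fun l hl => (Function.update_of_ne hl 0 h).symm)
  have hinj : ∀ x ∈ (G.image fun h => Function.update h j 0),
      ∀ y ∈ (G.image fun h => Function.update h j 0), edge G j x = edge G j y → x = y := by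
    intro x hx y hy hxy
    obtain ⟨a, ha, rfl⟩ := Finset.mem_image.mp hx
    obtain ⟨b, hb, rfl⟩ := Finset.mem_image.mp hy
    have hax := mem_edge_self G j ha
    have hay : a ∈ edge G j (Function.update b j 0) := hxy ▸ hax
    unfold edge at hax hay
    rw [Finset.mem_filter] at hax hay
    funext l
    by_cases hl : l = j
    · subst hl; simp
    · rw [← hax.2 l hl, hay.2 l hl]
  rw [h1, Finset.sum_image hinj]
  apply Finset.sum_subset
  · intro v hv
    obtain ⟨a, _, rfl⟩ := Finset.mem_image.mp hv
    simp [V]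
  · intro v hv hvn
    have he : edge G j v = ∅ := by
      by_contra hne
      obtain ⟨h, hh⟩ := Finset.nonempty_of_ne_empty hne
      unfold edge at hh
      rw [Finset.mem_filter] at hh
      apply hvn
      refine Finset.mem_image.mpr ⟨h, hh.1, ?_⟩
      rw [update_eq_iff_agree (by simpa [V] using hv)]
      exact hh.2
    simp [he]

lemma card_edge_le (G : Finset (Fin m → Fin p)) (j : Fin m) (v : Fin m → Fin p) :
    (edge G j v).card ≤ p := by
  have := Finset.card_le_card_of_injOn (f := fun h => h j)
    (s := edge G j v) (t := Finset.univ) (fun a _ => Finset.mem_univ _) ?_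
  · simpa using this
  · intro a ha b hb hab
    unfold edge at ha hb
    rw [Finset.coe_filter, Set.mem_setOf_eq] at ha hb
    funext l
    by_cases hl : l = j
    · subst hl; exact hab
    · rw [ha.2 l hl, hb.2 l hl]

lemma update_mem_edge_iff {G : Finset (Fin m → Fin p)} {j : Fin m} {v : Fin m → Fin p}
    (b : Fin p) : Function.update v j b ∈ edge G j v ↔ Function.update v j b ∈ G := by
  unfold edge
  rw [Finset.mem_filter]
  exact ⟨fun h => h.1, fun h => ⟨h, fun l hl => Function.update_of_ne hl b v⟩⟩

lemma card_edge_eq_filter (G : Finset (Fin m → Fin p)) (j : Fin m) (v : Fin m → Fin p) :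
    (edge G j v).card = (Finset.univ.filter fun b => Function.update v j b ∈ G).card := by
  apply Finset.card_nbij' (fun h => h j) (fun b => Function.update v j b)
  · intro a ha
    rw [Finset.mem_coe, Finset.mem_filter]
    refine ⟨Finset.mem_univ _, ?_⟩
    unfold edge at ha
    rw [Finset.mem_coe, Finset.mem_filter] at ha
    have : Function.update v j (a j) = a := by
      funext l
      by_cases hl : l = j
      · subst hl; simp
      · rw [Function.update_of_ne hl, ha.2 l hl]
    rw [this]
    exact ha.1
  · intro b hb
    rw [Finset.mem_coe, Finset.mem_filter] at hb
    exact (update_mem_edge_iff b).mpr hb.2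
  · intro a ha
    unfold edge at ha
    rw [Finset.mem_coe, Finset.mem_filter] at ha
    funext l
    by_cases hl : l = j
    · subst hl; simp
    · dsimp only; rw [Function.update_of_ne hl, ha.2 l hl]
  · intro b _
    simp

lemma mem_shift {i : Fin m} {H : Finset (Fin m → Fin p)} {g : Fin m → Fin p} :
    g ∈ shift i H ↔ (g i : ℕ) < (edge H i g).card := by
  simp [shift, edge]

lemma card_filter_lt {n : ℕ} (hn : n ≤ p) :
    (Finset.univ.filter fun a : Fin p => (a : ℕ) < n).card = n := by
  have h : ∀ x ∈ Finset.range n, x < p := fun x hx => lt_of_lt_of_le (Finset.mem_range.mp hx) hn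
  rw [show (Finset.univ.filter fun a : Fin p => (a : ℕ) < n) = (Finset.range n).attachFin h by
    ext a; simp [Finset.mem_attachFin]]
  rw [Finset.card_attachFin, Finset.card_range]

lemma shift_eq_filter (i : Fin m) (H : Finset (Fin m → Fin p)) :
    shift i H = Finset.univ.filter fun g => (g i : ℕ) < (edge H i g).card := rfl

lemma edge_shift_card_i (H : Finset (Fin m → Fin p)) (i : Fin m) (v : Fin m → Fin p) :
    (edge (shift i H) i v).card = (edge H i v).card := by
  have h1 : edge (shift i H) i v =
      Finset.univ.filter (fun g => ((g i : ℕ) < (edge H i v).card) ∧ ∀ l, l ≠ i → g l = v l) := by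
    rw [shift_eq_filter]
    unfold edge
    rw [Finset.filter_filter]
    apply Finset.filter_congr
    intro g _
    constructor
    · rintro ⟨hg1, hg2⟩
      refine ⟨?_, hg2⟩
      have hce : edge H i g = edge H i v := edge_congr H i hg2
      exact lt_of_lt_of_eq hg1 (congrArg Finset.card hce)
    · rintro ⟨hg1, hg2⟩
      refine ⟨?_, hg2⟩
      have hce : edge H i g = edge H i v := edge_congr H i hg2
      exact lt_of_lt_of_eq hg1 (congrArg Finset.card hce).symm
  have h2 : (Finset.univ.filter
        (fun g : Fin m → Fin p => ((g i : ℕ) < (edge H i v).card) ∧ ∀ l, l ≠ i → g l = v l)).card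
      = (Finset.univ.filter fun a : Fin p => (a : ℕ) < (edge H i v).card).card := by
    apply Finset.card_nbij' (fun g => g i) (fun a => Function.update v i a)
    · intro g hg
      rw [Finset.mem_coe, Finset.mem_filter] at hg ⊢
      exact ⟨Finset.mem_univ _, hg.2.1⟩
    · intro a ha
      rw [Finset.mem_coe, Finset.mem_filter] at ha ⊢
      refine ⟨Finset.mem_univ _, by simpa using ha.2, fun l hl => Function.update_of_ne hl a v⟩
    · intro g hg
      rw [Finset.mem_coe, Finset.mem_filter] at hg
      funext l
      by_cases hl : l = i
      · subst hl; simp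
      · dsimp only; rw [Function.update_of_ne hl, hg.2.2 l hl]
    · intro a _
      simp
  rw [h1, h2, card_filter_lt (card_edge_le H i v)]

/-- top-n selection -/
lemma exists_top {α : Type*} [DecidableEq α] (f : α → ℕ) :
    ∀ (n : ℕ) (s : Finset α), n ≤ s.card →
      ∃ t ⊆ s, t.card = n ∧ ∀ x ∈ s, x ∉ t → ∀ y ∈ t, f x ≤ f y := by
  intro n
  induction n with
  | zero => exact fun s _ => ⟨∅, Finset.empty_subset s, rfl, by simp⟩
  | succ n ih =>
    intro s hs
    have hne : s.Nonempty := Finset.card_pos.mp (by omega)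
    obtain ⟨y, hy, hymax⟩ := Finset.exists_max_image s f hne
    have hcard : n ≤ (s.erase y).card := by
      rw [Finset.card_erase_of_mem hy]; omega
    obtain ⟨t, hts, htc, htp⟩ := ih (s.erase y) hcard
    refine ⟨insert y t, ?_, ?_, ?_⟩
    · intro z hz
      rcases Finset.mem_insert.mp hz with h | h
      · subst h; exact hy
      · exact (Finset.erase_subset _ _) (hts h)
    · rw [Finset.card_insert_of_notMem fun h => (Finset.mem_erase.mp (hts h)).1 rfl, htc]
    · intro x hx hxt z hz
      rcases Finset.mem_insert.mp hz with h | h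
      · subst h; exact hymax x hx
      · have hxe : x ∈ s.erase y := Finset.mem_erase.mpr ⟨fun h => hxt (by simp [h]), hx⟩
        exact htp x hxe (fun h => hxt (Finset.mem_insert_of_mem h)) z h

lemma swap_count (B : Finset (Fin p)) (P : Fin p → Fin p → Prop) [∀ a b, Decidable (P a b)] :
    ∑ a : Fin p, (B.filter fun b => P a b).card
      = ∑ b ∈ B, (Finset.univ.filter fun a => P a b).card := by
  simp only [Finset.card_filter]
  exact Finset.sum_comm

lemma grid_key (k : ℕ) (A : Finset (Fin p × Fin p)) :
    ∑ a : Fin p, min ((Finset.univ.filter fun b =>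
        (a : ℕ) < (Finset.univ.filter fun a' => (a', b) ∈ A).card).card) k
      ≤ ∑ a : Fin p, min ((Finset.univ.filter fun b => (a, b) ∈ A).card) k := by
  set c : Fin p → ℕ := fun b => (Finset.univ.filter fun a' => (a', b) ∈ A).card with hc
  obtain ⟨B, hBsub, hBcard, hBtop⟩ := exists_top c (min k p) Finset.univ
    (by simp [min_le_right])
  have hBk : B.card ≤ k := by rw [hBcard]; exact min_le_left k p
  calc ∑ a : Fin p, min ((Finset.univ.filter fun b => (a : ℕ) < c b).card) k
      ≤ ∑ a : Fin p, (B.filter fun b => (a : ℕ) < c b).card := by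
        apply Finset.sum_le_sum
        intro a _
        by_cases hsub : (Finset.univ.filter fun b => (a : ℕ) < c b) ⊆ B
        · have h1 : (Finset.univ.filter fun b => (a : ℕ) < c b)
              ⊆ B.filter fun b => (a : ℕ) < c b := by
            intro b hb
            rw [Finset.mem_filter] at hb ⊢
            exact ⟨hsub (by simpa using hb), hb.2⟩
          exact le_trans (min_le_left _ _) (Finset.card_le_card h1)
        · obtain ⟨b₀, hb₀, hb₀B⟩ := Finset.not_subset.mp hsub
          rw [Finset.mem_filter] at hb₀
          have hBall : B.filter (fun b => (a : ℕ) < c b) = B := by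
            apply Finset.filter_true_of_mem
            intro y hy
            exact lt_of_lt_of_le hb₀.2 (hBtop b₀ (Finset.mem_univ _) hb₀B y hy)
          rw [hBall, hBcard]
          have : (Finset.univ.filter fun b => (a : ℕ) < c b).card ≤ p := by
            simpa using Finset.card_le_card
              (Finset.filter_subset (fun b => (a : ℕ) < c b) Finset.univ)
          omega
    _ = ∑ b ∈ B, (Finset.univ.filter fun a : Fin p => (a : ℕ) < c b).card :=
        swap_count B (fun a b => (a : ℕ) < c b)
    _ = ∑ b ∈ B, c b := by
        apply Finset.sum_congr rfl
        intro b _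
        apply card_filter_lt
        simpa [hc] using Finset.card_le_card
          (Finset.filter_subset (fun a' => (a', b) ∈ A) Finset.univ)
    _ = ∑ a : Fin p, (B.filter fun b => (a, b) ∈ A).card :=
        (swap_count B (fun a b => (a, b) ∈ A)).symm
    _ ≤ ∑ a : Fin p, min ((Finset.univ.filter fun b => (a, b) ∈ A).card) k := by
        apply Finset.sum_le_sum
        intro a _
        apply le_min
        · exact Finset.card_le_card (Finset.filter_subset_filter _ hBsub)
        · exact le_trans (Finset.card_le_card (Finset.filter_subset _ _)) hBk

lemma upd3 {i j : Fin m} (hij : i ≠ j) (w : Fin m → Fin p) (a a' b : Fin p) :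
    Function.update (Function.update (Function.update w i a) j b) i a'
      = Function.update (Function.update w i a') j b := by
  funext l
  by_cases hl : l = i
  · subst hl
    rw [Function.update_self, Function.update_of_ne hij, Function.update_self]
  · rw [Function.update_of_ne hl]
    by_cases hlj : l = j
    · subst hlj; rw [Function.update_self, Function.update_self]
    · rw [Function.update_of_ne hlj, Function.update_of_ne hlj,
        Function.update_of_ne hl, Function.update_of_ne hl]

lemma per_w (H : Finset (Fin m → Fin p)) (i j : Fin m) (hij : j ≠ i)
    (w : Fin m → Fin p) :
    ∑ a : Fin p, min ((edge (shift i H) j (Function.update w i a)).card) k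
      ≤ ∑ a : Fin p, min ((edge H j (Function.update w i a)).card) k := by
  classical
  set A : Finset (Fin p × Fin p) := Finset.univ.filter
    (fun x : Fin p × Fin p =>
      Function.update (Function.update w i x.1) j x.2 ∈ H) with hA
  have hmemA : ∀ a b : Fin p,
      ((a, b) ∈ A ↔ Function.update (Function.update w i a) j b ∈ H) := by
    intro a b; simp [hA]
  have ha : ∀ a : Fin p, (edge H j (Function.update w i a)).card
      = (Finset.univ.filter fun b => (a, b) ∈ A).card := by
    intro a
    rw [card_edge_eq_filter]
    congr 1
    apply Finset.filter_congr
    intro b _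
    simp [hmemA a b]
  have hcol : ∀ (a b : Fin p),
      (edge H i (Function.update (Function.update w i a) j b)).card
        = (Finset.univ.filter fun a' => (a', b) ∈ A).card := by
    intro a b
    rw [card_edge_eq_filter]
    congr 1
    apply Finset.filter_congr
    intro a' _
    rw [upd3 (Ne.symm hij) w a a' b]
    simp [hmemA a' b]
  have hb : ∀ a : Fin p, (edge (shift i H) j (Function.update w i a)).card
      = (Finset.univ.filter fun b =>
          (a : ℕ) < (Finset.univ.filter fun a' => (a', b) ∈ A).card).card := by
    intro a
    rw [card_edge_eq_filter]
    congr 1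
    apply Finset.filter_congr
    intro b _
    rw [mem_shift, hcol a b]
    have hgi : Function.update (Function.update w i a) j b i = a := by
      rw [Function.update_of_ne (Ne.symm hij), Function.update_self]
    rw [hgi]
  calc ∑ a : Fin p, min ((edge (shift i H) j (Function.update w i a)).card) k
      = ∑ a : Fin p, min ((Finset.univ.filter fun b =>
          (a : ℕ) < (Finset.univ.filter fun a' => (a', b) ∈ A).card).card) k := by
        exact Finset.sum_congr rfl fun a _ => by rw [hb a]
    _ ≤ ∑ a : Fin p, min ((Finset.univ.filter fun b => (a, b) ∈ A).card) k :=
        grid_key k A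
    _ = ∑ a : Fin p, min ((edge H j (Function.update w i a)).card) k :=
        Finset.sum_congr rfl fun a _ => by rw [ha a]

lemma sum_V_eq (i j : Fin m) (hij : i ≠ j) (F : (Fin m → Fin p) → ℕ) :
    ∑ v ∈ V j, F v
      = ∑ w ∈ (Finset.univ.filter fun w : Fin m → Fin p => w i = 0 ∧ w j = 0),
          ∑ a : Fin p, F (Function.update w i a) := by
  rw [← Finset.sum_product
    (s := Finset.univ.filter fun w : Fin m → Fin p => w i = 0 ∧ w j = 0)
    (t := Finset.univ) (f := fun x => F (Function.update x.1 i x.2))]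
  apply Finset.sum_nbij' (i := fun v => (Function.update v i 0, v i))
    (j := fun x => Function.update x.1 i x.2)
  · intro v hv
    simp only [V, Finset.mem_filter] at hv
    rw [Finset.mem_product, Finset.mem_filter]
    refine ⟨⟨Finset.mem_univ _, Function.update_self i 0 v, ?_⟩, Finset.mem_univ _⟩
    dsimp only
    rw [Function.update_of_ne (Ne.symm hij)]
    exact hv.2
  · intro x hx
    rw [Finset.mem_product, Finset.mem_filter] at hx
    simp only [V, Finset.mem_filter]
    refine ⟨Finset.mem_univ _, ?_⟩
    rw [Function.update_of_ne (Ne.symm hij)]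
    exact hx.1.2.2
  · intro v _
    funext l
    dsimp only
    by_cases hl : l = i
    · subst hl; rw [Function.update_self]
    · rw [Function.update_of_ne hl, Function.update_of_ne hl]
  · intro x hx
    rw [Finset.mem_product, Finset.mem_filter] at hx
    have h1 : Function.update (Function.update x.1 i x.2) i 0 = x.1 := by
      funext l
      by_cases hl : l = i
      · subst hl; rw [Function.update_self, hx.1.2.1]
      · rw [Function.update_of_ne hl, Function.update_of_ne hl]
    have h2 : Function.update x.1 i x.2 i = x.2 := Function.update_self i x.2 x.1
    rw [h1, h2]
  · intro v hv
    congr 1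
    funext l
    dsimp only
    by_cases hl : l = i
    · subst hl; rw [Function.update_self]
    · rw [Function.update_of_ne hl, Function.update_of_ne hl]

lemma sum_sub_eq (G : Finset (Fin m → Fin p)) (j : Fin m) (k : ℕ) :
    ∑ v ∈ V j, ((edge G j v).card - k)
      = G.card - ∑ v ∈ V j, min ((edge G j v).card) k := by
  have h1 : ∀ v ∈ V j, (edge G j v).card - k
      = (edge G j v).card - min ((edge G j v).card) k := fun v _ => by omega
  rw [Finset.sum_congr rfl h1,
    Finset.sum_tsub_distrib (V j) (fun v _ => min_le_left _ _), sum_edge_card]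

lemma card_shift (i : Fin m) (H : Finset (Fin m → Fin p)) :
    (shift i H).card = H.card := by
  rw [← sum_edge_card (shift i H) i, ← sum_edge_card H i]
  exact Finset.sum_congr rfl fun v _ => edge_shift_card_i H i v

lemma M_le (H : Finset (Fin m → Fin p)) (i j : Fin m) :
    ∑ v ∈ V j, min ((edge (shift i H) j v).card) k
      ≤ ∑ v ∈ V j, min ((edge H j v).card) k := by
  by_cases hij : j = i
  · subst hij
    exact le_of_eq (Finset.sum_congr rfl fun v _ => by rw [edge_shift_card_i])
  · rw [sum_V_eq i j (Ne.symm hij) (fun v => min ((edge (shift i H) j v).card) k),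
      sum_V_eq i j (Ne.symm hij) (fun v => min ((edge H j v).card) k)]
    exact Finset.sum_le_sum fun w _ => per_w H i j hij w

end Stmt11

open Stmt11 in
/-- The shifting average `k`-degree `savd(G) = (1/|G|) ∑_{e} max(|e| - k, 0)`
(the sum ranging over the edges of the one-inclusion graph of `G`) does not
decrease under shifting. -/
theorem stmt11 {m p k : ℕ} (H : Finset (Fin m → Fin p)) (hH : H.Nonempty)
    (i : Fin m) :
    ((∑ j : Fin m, ∑ e ∈ H.image fun h => edge H j h, (e.card - k) : ℕ) : ℝ)
        / H.card
      ≤ ((∑ j : Fin m, ∑ e ∈ (shift i H).image fun h => edge (shift i H) j h,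
            (e.card - k) : ℕ) : ℝ) / (shift i H).card := by
  have hp : 0 < p := (hH.choose i).pos
  haveI : NeZero p := ⟨hp.ne'⟩
  have hnum : (∑ j : Fin m, ∑ e ∈ H.image fun h => edge H j h, (e.card - k))
      ≤ ∑ j : Fin m, ∑ e ∈ (shift i H).image fun h => edge (shift i H) j h,
          (e.card - k) := by
    apply Finset.sum_le_sum
    intro j _
    rw [sum_image_edge H j k, sum_image_edge (shift i H) j k, sum_sub_eq, sum_sub_eq,
      card_shift]
    exact Nat.sub_le_sub_left (M_le H i j) _
  have hc : (((shift i H).card : ℕ) : ℝ) = (H.card : ℝ) := by rw [card_shift]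
  rw [hc]
  have hH0 : (0 : ℝ) < (H.card : ℝ) := by
    exact_mod_cast Finset.card_pos.mpr hH
  apply div_le_div_of_nonneg_right ?_ ?_
  case _ => exact_mod_cast hnum
  case _ => exact le_of_lt hH0
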